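/- Let G be a simple graph on a finite vertex type V satisfying the cycle condition, let A be a finite type of agents, let f₀ : A → V be an injective configuration, let a₀ ∈ A, and let W be any walk in G starting at f₀(a₀), of length k. Then there exist configurations f₀, f₁, …, f_k such that for each 0 ≤ t < k the pair (f_t, f_{t+1}) is a valid one-step transition, and f_t(a₀) = W.getVert(t) for every 0 ≤ t ≤ k. (Existential content of Lemma 4.3 of the paper: the agent with highest priority can be moved along an arbitrary path of any length while all agents execute collision-free moves.) -/

import Mathlib

/-- A valid one-step transition between configurations of agents on a graph:
no vertex conflict, every agent stays or moves along an edge, and no swap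
conflict. -/
def ValidStep {V A : Type*} (G : SimpleGraph V) (f f' : A → V) : Prop :=
  Function.Injective f' ∧
  (∀ a, f' a = f a ∨ G.Adj (f a) (f' a)) ∧
  (∀ a b, a ≠ b → ¬(f' a = f b ∧ f' b = f a))

/-- `G` satisfies the cycle condition if for every pair of adjacent vertices
`u, v` there is a cycle from `u` to `u` whose second vertex is `v`. -/
def CycleCond {V : Type*} (G : SimpleGraph V) : Prop :=
  ∀ u v : V, G.Adj u v → ∃ c : G.Walk u u, c.IsCycle ∧ c.getVert 1 = v

lemma walk_support_getElem {V : Type*} {G : SimpleGraph V} {u v : V} (p : G.Walk u v)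
    (i : ℕ) (h : i < p.support.length) : p.support[i] = p.getVert i := by
  induction p generalizing i with
  | nil => simp at h; subst h; simp
  | cons hadj p ih =>
    cases i with
    | zero => simp
    | succ i =>
      simp only [SimpleGraph.Walk.support_cons, List.getElem_cons_succ,
        SimpleGraph.Walk.getVert_cons_succ]
      exact ih i (by simpa [SimpleGraph.Walk.length_support] using h)

lemma rot_perm {V : Type*} [DecidableEq V] (G : SimpleGraph V) {u v : V}
    (c : G.Walk u u) (hc : c.IsCycle) (h1 : c.getVert 1 = v) :
    ∃ σ : Equiv.Perm V, σ u = v ∧ (∀ x, σ x = x ∨ G.Adj x (σ x)) ∧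
      (∀ x y, x ≠ y → ¬(σ x = y ∧ σ y = x)) := by
  set n := c.length with hn
  have hn3 : 3 ≤ n := hc.three_le_length
  set l : List V := c.support.tail with hldef
  have hl : l.Nodup := hc.support_nodup
  have hlen : l.length = n := by
    simp [hldef, List.length_tail, SimpleGraph.Walk.length_support, hn]
  have hget : ∀ i (h : i < n), l[i]'(by omega) = c.getVert (i + 1) := by
    intro i h
    have : l[i]'(by omega) = c.support[i+1]'(by
        simp [SimpleGraph.Walk.length_support]; omega) := by
      simp [hldef]
    rw [this, walk_support_getElem]
  have hσ : ∀ i (h : i < n), l.formPerm (l[i]'(by omega)) = l[(i+1) % n]'(by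
      exact (hlen ▸ Nat.mod_lt _ (by omega))) := by
    intro i h
    rw [List.formPerm_apply_getElem l hl i (by omega)]
    simp [hlen]
  refine ⟨l.formPerm, ?_, ?_, ?_⟩
  · have hu : l[n-1]'(by omega) = u := by
      rw [hget (n-1) (by omega)]
      have : n - 1 + 1 = n := by omega
      rw [this, hn]
      exact c.getVert_length
    have := hσ (n-1) (by omega)
    rw [hu] at this
    rw [this]
    have : (n - 1 + 1) % n = 0 := by
      have : n - 1 + 1 = n := by omega
      simp [this]
    simp only [this]
    rw [hget 0 (by omega)]
    exact h1
  · intro x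
    by_cases hx : x ∈ l
    · obtain ⟨i, hi, rfl⟩ := List.getElem_of_mem hx
      right
      rw [hσ i (by omega), hget i (by omega), hget ((i+1) % n) (Nat.mod_lt _ (by omega))]
      rcases Nat.lt_or_ge (i+1) n with h | h
      · rw [Nat.mod_eq_of_lt h]
        exact c.adj_getVert_succ (by omega)
      · have hA : G.Adj u (c.getVert 1) := by
          have := c.adj_getVert_succ (show 0 < c.length by omega)
          simpa using this
        have hu : c.getVert n = u := c.getVert_length
        rw [show (i+1) % n = 0 from by rw [show i+1 = n from by omega]; simp,
          show i+1 = n from by omega, hu]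
        exact hA
    · left; exact List.formPerm_apply_of_notMem hx
  · rintro x y hxy ⟨h1', h2'⟩
    have hx : x ∈ l := by
      by_contra hx
      exact hxy (h1' ▸ (List.formPerm_apply_of_notMem hx).symm)
    obtain ⟨i, hi, rfl⟩ := List.getElem_of_mem hx
    rw [hσ i (by omega)] at h1'
    subst h1'
    rw [hσ ((i+1) % n) (Nat.mod_lt _ (by omega))] at h2'
    have hinj : ((i+1) % n + 1) % n = i := (List.Nodup.getElem_inj_iff hl).mp h2'
    rcases Nat.lt_or_ge (i+1) n with h | h
    · rw [Nat.mod_eq_of_lt h] at hinj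
      rcases Nat.lt_or_ge (i+2) n with h2 | h2
      · rw [Nat.mod_eq_of_lt (show i+1+1 < n from by omega)] at hinj; omega
      · rw [show i+1+1 = n from by omega, Nat.mod_self] at hinj; omega
    · rw [show i+1 = n from by omega, Nat.mod_self,
        Nat.mod_eq_of_lt (show 0+1 < n from by omega)] at hinj
      omega

/-- Lemma 4.3 (existential content): the highest-priority agent can be moved
along an arbitrary walk of any length while all agents execute collision-free
moves. -/
theorem highest_priority_agent_moves_along_walk
    {V A : Type*} [Fintype V] [Fintype A] (G : SimpleGraph V)
    (hG : CycleCond G)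
    (f0 : A → V) (hf0 : Function.Injective f0)
    (a0 : A) (w : V) (W : G.Walk (f0 a0) w) :
    ∃ F : ℕ → (A → V), F 0 = f0 ∧
      (∀ t, t < W.length → ValidStep G (F t) (F (t + 1))) ∧
      (∀ t, t ≤ W.length → F t a0 = W.getVert t) := by
  classical
  have key : ∀ t, t < W.length → ∃ σ : Equiv.Perm V,
      σ (W.getVert t) = W.getVert (t+1) ∧ (∀ x, σ x = x ∨ G.Adj x (σ x)) ∧
      (∀ x y, x ≠ y → ¬(σ x = y ∧ σ y = x)) := by
    intro t ht
    obtain ⟨c, hc, h1⟩ := hG _ _ (W.adj_getVert_succ ht)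
    exact rot_perm G c hc h1
  choose σ hσ1 hσ2 hσ3 using key
  set S : ℕ → Equiv.Perm V := fun t => if h : t < W.length then σ t h else 1 with hS
  set F : ℕ → A → V := fun t => Nat.rec f0 (fun n fn => ⇑(S n) ∘ fn) t with hF
  have hFsucc : ∀ t, F (t+1) = ⇑(S t) ∘ F t := fun t => rfl
  have hinj : ∀ t, Function.Injective (F t) := by
    intro t
    induction t with
    | zero => exact hf0
    | succ t ih => rw [hFsucc]; exact (S t).injective.comp ih
  refine ⟨F, rfl, ?_, ?_⟩
  · intro t ht
    have hSt : S t = σ t ht := by rw [hS]; simp [ht]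
    rw [hFsucc, hSt]
    refine ⟨(σ t ht).injective.comp (hinj t), fun a => hσ2 t ht (F t a), ?_⟩
    intro a b hab ⟨h1', h2'⟩
    exact hσ3 t ht (F t a) (F t b) (fun h => hab (hinj t h)) ⟨h1', h2'⟩
  · intro t ht
    induction t with
    | zero => simp [hF]
    | succ t ih =>
      have hlt : t < W.length := by omega
      have hSt : S t = σ t hlt := by rw [hS]; simp [hlt]
      rw [hFsucc]; simp only [Function.comp_apply, hSt]
      rw [ih (by omega), hσ1 t hlt]
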